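/- Population double robustness of the doubly robust functional with respect to the outcome model (robustness property of cATE_DR claimed in Section 5.3): let m : {0,1} × 𝒲 × ℰ → ℝ be an arbitrary function (a possibly misspecified outcome model) and let π be the true propensity score among concurrent units. Then (1/𝒫(V=1)) · 𝔼[ 1{V=1} · ( (2A−1)/(A·π(W,E) + (1−A)·(1−π(W,E))) · (Y − m(A,W,E)) + m(1,W,E) − m(0,W,E) ) ] = Σ_{(w,e): 𝒫(W=w,E=e,V=1)>0} (μ_oc(1,w,e) − μ_oc(0,w,e)) · p(w,e|V=1). -/

import Mathlib

open MeasureTheory Finset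

/-- Conditional expectation given an event: `𝔼[X | B] := 𝔼[X · 1_B] / 𝒫(B)`. -/
noncomputable def condMean {Ω : Type*} [MeasurableSpace Ω] (P : Measure Ω)
    (X : Ω → ℝ) (B : Set Ω) : ℝ :=
  (∫ ω, B.indicator X ω ∂P) / (P B).toReal

/-- Population double robustness of the doubly robust functional with respect to the
outcome model (Section 5.3): for an arbitrary (possibly misspecified) outcome model `m`
and the true propensity score `π` among concurrent units,
`(1/𝒫(V=1)) · 𝔼[1{V=1} · ((2A−1)/(A·π(W,E)+(1−A)·(1−π(W,E))) · (Y − m(A,W,E))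
  + m(1,W,E) − m(0,W,E))] = Σ_{(w,e) : 𝒫(W=w,E=e,V=1)>0} (μ_oc(1,w,e) − μ_oc(0,w,e)) · p(w,e|V=1)`. -/
theorem doubly_robust_wrt_outcome_model
    {Ω : Type*} [MeasurableSpace Ω] (P : Measure Ω) [IsProbabilityMeasure P]
    {𝓦 ℰ : Type*} [Fintype 𝓦] [Fintype ℰ] [Nonempty 𝓦] [Nonempty ℰ]
    [MeasurableSpace 𝓦] [MeasurableSingletonClass 𝓦]
    [MeasurableSpace ℰ] [MeasurableSingletonClass ℰ]
    (W : Ω → 𝓦) (E : Ω → ℰ) (V : Ω → Fin 2) (A : Ω → Fin 2) (Y : Ω → ℝ)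
    (hW : Measurable W) (hE : Measurable E) (hV : Measurable V) (hA : Measurable A)
    (hY : Integrable Y P)
    (hV1 : 0 < P {ω | V ω = 1})
    -- positivity of both arms among concurrent units
    (hpos1 : ∀ (w : 𝓦) (e : ℰ), 0 < P {ω | W ω = w ∧ E ω = e ∧ V ω = 1} →
      0 < P {ω | A ω = 1 ∧ W ω = w ∧ E ω = e ∧ V ω = 1})
    (hpos0 : ∀ (w : 𝓦) (e : ℰ), 0 < P {ω | W ω = w ∧ E ω = e ∧ V ω = 1} →
      0 < P {ω | A ω = 0 ∧ W ω = w ∧ E ω = e ∧ V ω = 1})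
    -- the true outcome regression among concurrent units
    (μoc : Fin 2 → 𝓦 → ℰ → ℝ)
    (hμoc : ∀ (a : Fin 2) (w : 𝓦) (e : ℰ), μoc a w e =
      condMean P Y {ω | A ω = a ∧ W ω = w ∧ E ω = e ∧ V ω = 1})
    -- the true propensity score among concurrent units
    (π : 𝓦 → ℰ → ℝ)
    (hπ : ∀ (w : 𝓦) (e : ℰ), π w e =
      (P {ω | A ω = 1 ∧ W ω = w ∧ E ω = e ∧ V ω = 1}).toReal /
        (P {ω | W ω = w ∧ E ω = e ∧ V ω = 1}).toReal)
    -- an arbitrary, possibly misspecified, outcome model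
    (m : Fin 2 → 𝓦 → ℰ → ℝ) :
    (1 / (P {ω | V ω = 1}).toReal) *
      ∫ ω, (if V ω = 1 then
          (2 * ((A ω : ℕ) : ℝ) - 1) /
              (((A ω : ℕ) : ℝ) * π (W ω) (E ω) +
                (1 - ((A ω : ℕ) : ℝ)) * (1 - π (W ω) (E ω))) *
              (Y ω - m (A ω) (W ω) (E ω)) +
            m 1 (W ω) (E ω) - m 0 (W ω) (E ω)
        else 0) ∂P =
      ∑ w : 𝓦, ∑ e : ℰ,
        if 0 < P {ω | W ω = w ∧ E ω = e ∧ V ω = 1} then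
          (μoc 1 w e - μoc 0 w e) *
            ((P {ω | W ω = w ∧ E ω = e ∧ V ω = 1}).toReal / (P {ω | V ω = 1}).toReal)
        else 0 := by
  classical
  -- the per-stratum sets
  set S : Fin 2 → 𝓦 → ℰ → Set Ω :=
    fun a w e => {ω | A ω = a ∧ W ω = w ∧ E ω = e ∧ V ω = 1} with hS
  have hSmeas : ∀ a w e, MeasurableSet (S a w e) := by
    intro a w e
    exact (hA (measurableSet_singleton a)).inter
      ((hW (measurableSet_singleton w)).inter
        ((hE (measurableSet_singleton e)).inter (hV (measurableSet_singleton 1))))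
  set Swe : 𝓦 → ℰ → Set Ω := fun w e => {ω | W ω = w ∧ E ω = e ∧ V ω = 1} with hSwe
  -- the inverse propensity coefficient
  set c : Fin 2 → 𝓦 → ℰ → ℝ := fun a w e =>
    (2 * ((a : ℕ) : ℝ) - 1) /
      (((a : ℕ) : ℝ) * π w e + (1 - ((a : ℕ) : ℝ)) * (1 - π w e)) with hc
  -- the DR integrand per stratum
  set g : Fin 2 → 𝓦 → ℰ → Ω → ℝ := fun a w e ω =>
    c a w e * (Y ω - m a w e) + m 1 w e - m 0 w e with hg
  have hfin2 : ∀ x : Fin 2, x = 0 ∨ x = 1 := by decide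
  -- pointwise decomposition of the integrand
  have hpt : ∀ ω, (if V ω = 1 then
        (2 * ((A ω : ℕ) : ℝ) - 1) /
            (((A ω : ℕ) : ℝ) * π (W ω) (E ω) +
              (1 - ((A ω : ℕ) : ℝ)) * (1 - π (W ω) (E ω))) *
            (Y ω - m (A ω) (W ω) (E ω)) +
          m 1 (W ω) (E ω) - m 0 (W ω) (E ω)
      else 0) =
      ∑ a : Fin 2, ∑ w : 𝓦, ∑ e : ℰ, (S a w e).indicator (g a w e) ω := by
    intro ω
    simp only [hS, hg, hc, Set.indicator_apply, Set.mem_setOf_eq, ite_and,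
      Finset.sum_ite_eq, Finset.mem_univ, if_true]
    by_cases h : V ω = 1 <;> simp [h]
  -- integrability of each piece
  have hgint : ∀ a w e, Integrable ((S a w e).indicator (g a w e)) P := by
    intro a w e
    refine Integrable.indicator ?_ (hSmeas a w e)
    have : Integrable (fun ω => c a w e * (Y ω - m a w e)) P :=
      (hY.sub (integrable_const _)).const_mul _
    exact (this.add (integrable_const _)).sub (integrable_const _)
  -- value of each piece
  have hval : ∀ a w e, ∫ ω, (S a w e).indicator (g a w e) ω ∂P =
      c a w e * ((∫ ω, (S a w e).indicator Y ω ∂P) - m a w e * (P (S a w e)).toReal)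
        + (m 1 w e - m 0 w e) * (P (S a w e)).toReal := by
    intro a w e
    rw [integral_indicator (hSmeas a w e), integral_indicator (hSmeas a w e)]
    have h1 : (g a w e) = fun ω =>
        c a w e * Y ω + (m 1 w e - m 0 w e - c a w e * m a w e) := by
      funext ω; simp only [hg]; ring
    rw [h1, integral_add ((hY.restrict).const_mul _) (integrable_const _),
      integral_const_mul, setIntegral_const]
    simp only [smul_eq_mul, measureReal_def]
    ring
  -- swap integral and sums
  have hint : ∫ ω, (if V ω = 1 then
        (2 * ((A ω : ℕ) : ℝ) - 1) /
            (((A ω : ℕ) : ℝ) * π (W ω) (E ω) +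
              (1 - ((A ω : ℕ) : ℝ)) * (1 - π (W ω) (E ω))) *
            (Y ω - m (A ω) (W ω) (E ω)) +
          m 1 (W ω) (E ω) - m 0 (W ω) (E ω)
      else 0) ∂P =
      ∑ w : 𝓦, ∑ e : ℰ, ∑ a : Fin 2, ∫ ω, (S a w e).indicator (g a w e) ω ∂P := by
    rw [show (fun ω => (if V ω = 1 then
        (2 * ((A ω : ℕ) : ℝ) - 1) /
            (((A ω : ℕ) : ℝ) * π (W ω) (E ω) +
              (1 - ((A ω : ℕ) : ℝ)) * (1 - π (W ω) (E ω))) *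
            (Y ω - m (A ω) (W ω) (E ω)) +
          m 1 (W ω) (E ω) - m 0 (W ω) (E ω)
      else 0)) = fun ω => ∑ a : Fin 2, ∑ w : 𝓦, ∑ e : ℰ,
        (S a w e).indicator (g a w e) ω from funext hpt]
    rw [integral_finset_sum _ (fun a _ => integrable_finset_sum _
      (fun w _ => integrable_finset_sum _ (fun e _ => hgint a w e)))]
    have : ∀ a : Fin 2, (∫ ω, ∑ w : 𝓦, ∑ e : ℰ,
        (S a w e).indicator (g a w e) ω ∂P) = ∑ w : 𝓦, ∑ e : ℰ,
        ∫ ω, (S a w e).indicator (g a w e) ω ∂P := by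
      intro a
      rw [integral_finset_sum _ (fun w _ => integrable_finset_sum _
        (fun e _ => hgint a w e))]
      exact Finset.sum_congr rfl fun w _ =>
        integral_finset_sum _ (fun e _ => hgint a w e)
    simp only [this]
    rw [Finset.sum_comm]
    refine Finset.sum_congr rfl fun w _ => Finset.sum_comm
  -- per-stratum evaluation
  have hstratum : ∀ w e, ∑ a : Fin 2, ∫ ω, (S a w e).indicator (g a w e) ω ∂P =
      if 0 < P (Swe w e) then (μoc 1 w e - μoc 0 w e) * (P (Swe w e)).toReal else 0 := by
    intro w e
    by_cases hwe : 0 < P (Swe w e)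
    · rw [if_pos hwe]
      have hsub : ∀ a, S a w e ⊆ Swe w e := by
        intro a ω hω; exact ⟨hω.2.1, hω.2.2⟩
      have hp1 : 0 < P (S 1 w e) := hpos1 w e hwe
      have hp0 : 0 < P (S 0 w e) := hpos0 w e hwe
      have hne1 : (P (S 1 w e)).toReal ≠ 0 := by
        have := (ENNReal.toReal_pos hp1.ne' (measure_ne_top P _))
        exact this.ne'
      have hne0 : (P (S 0 w e)).toReal ≠ 0 := by
        have := (ENNReal.toReal_pos hp0.ne' (measure_ne_top P _))
        exact this.ne'
      -- additivity: P(Swe) = P(S0) + P(S1)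
      have hunion : Swe w e = S 0 w e ∪ S 1 w e := by
        ext ω
        simp only [hS, hSwe, Set.mem_setOf_eq, Set.mem_union]
        constructor
        · rintro ⟨h1, h2, h3⟩
          rcases hfin2 (A ω) with h | h
          · exact Or.inl ⟨h, h1, h2, h3⟩
          · exact Or.inr ⟨h, h1, h2, h3⟩
        · rintro (⟨_, h⟩ | ⟨_, h⟩) <;> exact h
      have hdisj : Disjoint (S 0 w e) (S 1 w e) := by
        rw [Set.disjoint_left]
        rintro ω ⟨h0, -⟩ ⟨h1, -⟩
        rw [h0] at h1; exact absurd h1 (by decide)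
      have hadd : (P (Swe w e)).toReal = (P (S 0 w e)).toReal + (P (S 1 w e)).toReal := by
        rw [hunion, measure_union hdisj (hSmeas 1 w e),
          ENNReal.toReal_add (measure_ne_top P _) (measure_ne_top P _)]
      -- propensity in terms of the measures
      have hπwe : π w e = (P (S 1 w e)).toReal / (P (Swe w e)).toReal := hπ w e
      -- outcome regressions
      have hI : ∀ a, (∫ ω, (S a w e).indicator Y ω ∂P) =
          μoc a w e * (P (S a w e)).toReal := by
        intro a
        rcases hfin2 a with h | h <;> subst h
        · rw [hμoc 0 w e, condMean, div_mul_cancel₀ _ hne0]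
        · rw [hμoc 1 w e, condMean, div_mul_cancel₀ _ hne1]
      rw [Fin.sum_univ_two, hval 0 w e, hval 1 w e, hI 0, hI 1]
      simp only [hc, hπwe, hadd]
      have h01 : ((((0 : Fin 2) : ℕ)) : ℝ) = 0 := by norm_num
      have h11 : ((((1 : Fin 2) : ℕ)) : ℝ) = 1 := by norm_num
      rw [h01, h11]
      set r0 := (P (S 0 w e)).toReal
      set r1 := (P (S 1 w e)).toReal
      have hr01 : r0 + r1 ≠ 0 := by positivity
      have hsub1 : 1 - r1 / (r0 + r1) = r0 / (r0 + r1) := by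
        field_simp
        ring
      field_simp [hsub1, hne0, hne1]
      ring
    · rw [if_neg hwe]
      push_neg at hwe
      have hzero : ∀ a, P (S a w e) = 0 := by
        intro a
        have hsub : S a w e ⊆ Swe w e := fun ω hω => ⟨hω.2.1, hω.2.2⟩
        exact measure_mono_null hsub (le_antisymm hwe zero_le)
      have hIz : ∀ a, (∫ ω, (S a w e).indicator Y ω ∂P) = 0 := by
        intro a
        rw [integral_indicator (hSmeas a w e), Measure.restrict_eq_zero.mpr (hzero a),
          integral_zero_measure]
      rw [Fin.sum_univ_two, hval 0 w e, hval 1 w e, hIz 0, hIz 1, hzero 0, hzero 1]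
      simp
  rw [hint]
  simp only [hstratum]
  rw [Finset.mul_sum]
  refine Finset.sum_congr rfl fun w _ => ?_
  rw [Finset.mul_sum]
  refine Finset.sum_congr rfl fun e _ => ?_
  split_ifs with h
  · show (1 / (P {ω | V ω = 1}).toReal) * ((μoc 1 w e - μoc 0 w e) * (P (Swe w e)).toReal)
      = (μoc 1 w e - μoc 0 w e) * ((P (Swe w e)).toReal / (P {ω | V ω = 1}).toReal)
    ring
  · exact mul_zero _
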